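/- If Δ₀, Δ₁ ∈ K^H, then hn⁺(Δ₀ ∪ Δ₁) ≥ ⌊min(hn⁺(Δ₀), hn⁺(Δ₁)) / 2⌋. -/

import Mathlib

def IsPFun (f : Finset (ℕ × ℕ)) : Prop :=
  ∀ p ∈ f, ∀ q ∈ f, p.1 = q.1 → p = q

def pdom (f : Finset (ℕ × ℕ)) : Finset ℕ := f.image Prod.fst

/-- `Δ ∈ K^H`: a finite nonempty family of finite partial functions with
nonempty domains and values in `H`. -/
def InKH (H : ℕ → Set ℕ) (Δ : Finset (Finset (ℕ × ℕ))) : Prop :=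
  Δ.Nonempty ∧ ∀ f ∈ Δ, IsPFun f ∧ f.Nonempty ∧ ∀ p ∈ f, p.2 ∈ H p.1

/-- A `k`-selector for `Δ`. -/
def IsSelector (Δ : Finset (Finset (ℕ × ℕ))) (k : ℕ)
    (F : Finset (ℕ × ℕ) → Finset ℕ) : Prop :=
  (∀ f ∈ Δ, F f ⊆ pdom f ∧ (F f).card = k) ∧
  ∀ f ∈ Δ, ∀ g ∈ Δ, f ≠ g → Disjoint (F f) (F g)

/-- `hn⁺(Δ) = max {k+1 : there is a k-selector for Δ}`. -/
noncomputable def hnPlus (Δ : Finset (Finset (ℕ × ℕ))) : ℕ :=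
  sSup {m | ∃ k F, IsSelector Δ k F ∧ m = k + 1}

def hnProp (Δ : Finset (Finset (ℕ × ℕ))) (k : ℕ) : Prop :=
  ∀ Δ' ⊆ Δ, ∃ Δ'' ⊆ Δ',
    (∀ f ∈ Δ'', ∀ g ∈ Δ'', f ≠ g → Disjoint (pdom f) (pdom g)) ∧
    k * Δ'.card ≤ (Δ''.biUnion pdom).card

/-- `hn(Δ)`. -/
noncomputable def hn (Δ : Finset (Finset (ℕ × ℕ))) : ℕ :=
  sSup {m | ∃ k, hnProp Δ k ∧ m = k + 1}

/-- `Δ₀ ⪯ Δ₁`. -/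
def Prec (Δ₀ Δ₁ : Finset (Finset (ℕ × ℕ))) : Prop :=
  ∀ f ∈ Δ₀, ∃ g ∈ Δ₁, g ⊆ f

/-- `HN(Δ) = max {hn(Δ') : Δ' ∈ K^H, Δ ⪯ Δ'}`. -/
noncomputable def HN (H : ℕ → Set ℕ) (Δ : Finset (Finset (ℕ × ℕ))) : ℕ :=
  sSup {m | ∃ Δ', InKH H Δ' ∧ Prec Δ Δ' ∧ m = hn Δ'}

lemma sel_bdd (Δ : Finset (Finset (ℕ × ℕ))) (hne : Δ.Nonempty) :
    BddAbove {m | ∃ k F, IsSelector Δ k F ∧ m = k + 1} := by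
  obtain ⟨f₀, hf₀⟩ := hne
  refine ⟨(pdom f₀).card + 1, ?_⟩
  rintro m ⟨k, F, ⟨hF, _⟩, rfl⟩
  have := hF f₀ hf₀
  have : k ≤ (pdom f₀).card := this.2 ▸ Finset.card_le_card this.1
  omega

lemma sel_zero (Δ : Finset (Finset (ℕ × ℕ))) : IsSelector Δ 0 (fun _ => ∅) := by
  constructor
  · intro f _; exact ⟨Finset.empty_subset _, Finset.card_empty⟩
  · intro f _ g _ _; simp

lemma hnPlus_attained (Δ : Finset (Finset (ℕ × ℕ))) (hne : Δ.Nonempty) :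
    ∃ k F, IsSelector Δ k F ∧ hnPlus Δ = k + 1 := by
  have hmem : hnPlus Δ ∈ {m | ∃ k F, IsSelector Δ k F ∧ m = k + 1} :=
    Nat.sSup_mem ⟨1, 0, fun _ => ∅, sel_zero Δ, rfl⟩ (sel_bdd Δ hne)
  obtain ⟨k, F, hF, hk⟩ := hmem
  exact ⟨k, F, hF, hk⟩

lemma selector_hall (Δ : Finset (Finset (ℕ × ℕ))) (k : ℕ) (F : Finset (ℕ × ℕ) → Finset ℕ)
    (hF : IsSelector Δ k F) (A : Finset (Finset (ℕ × ℕ))) (hA : A ⊆ Δ) :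
    k * A.card ≤ (A.biUnion pdom).card := by
  have h1 : (A.biUnion F).card = ∑ f ∈ A, (F f).card :=
    Finset.card_biUnion (fun f hf g hg hfg => hF.2 f (hA hf) g (hA hg) hfg)
  have h2 : ∑ f ∈ A, (F f).card = k * A.card := by
    rw [Finset.sum_congr rfl (fun f hf => (hF.1 f (hA hf)).2)]
    simp [mul_comm]
  have h3 : A.biUnion F ⊆ A.biUnion pdom := by
    intro n hn
    obtain ⟨f, hf, hn⟩ := Finset.mem_biUnion.mp hn
    exact Finset.mem_biUnion.mpr ⟨f, hf, (hF.1 f (hA hf)).1 hn⟩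
  calc k * A.card = (A.biUnion F).card := by rw [h1, h2]
    _ ≤ _ := Finset.card_le_card h3

lemma exists_selector (Δ : Finset (Finset (ℕ × ℕ))) (t : ℕ)
    (hH : ∀ A ⊆ Δ, t * A.card ≤ (A.biUnion pdom).card) :
    ∃ F, IsSelector Δ t F := by
  classical
  set ι := {h : Finset (ℕ × ℕ) // h ∈ Δ} × Fin t with hι
  have hall : ∀ s : Finset ι, s.card ≤ (s.biUnion (fun x => pdom x.1.1)).card := by
    intro s
    set A : Finset (Finset (ℕ × ℕ)) := s.image (fun x => x.1.1) with hA
    have hAΔ : A ⊆ Δ := by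
      intro h hh
      obtain ⟨x, _, rfl⟩ := Finset.mem_image.mp hh
      exact x.1.2
    have hbu : s.biUnion (fun x => pdom x.1.1) = A.biUnion pdom := by
      ext n
      simp only [Finset.mem_biUnion, hA, Finset.mem_image]
      constructor
      · rintro ⟨x, hx, hn⟩; exact ⟨x.1.1, ⟨x, hx, rfl⟩, hn⟩
      · rintro ⟨h, ⟨x, hx, rfl⟩, hn⟩; exact ⟨x, hx, hn⟩
    have hcard : s.card ≤ t * A.card := by
      have : s.card ≤ (A ×ˢ (Finset.univ : Finset (Fin t))).card := by
        apply Finset.card_le_card_of_injOn (fun x => (x.1.1, x.2))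
        · intro x hx
          simp [hA, Finset.mem_product]
          exact ⟨x, hx, rfl⟩
        · intro x _ y _ hxy
          simp at hxy
          exact Prod.ext hxy.1 hxy.2
      simpa [Finset.card_product, mul_comm] using this
    calc s.card ≤ t * A.card := hcard
      _ ≤ (A.biUnion pdom).card := hH A hAΔ
      _ = _ := by rw [hbu]
  obtain ⟨f, hfinj, hfmem⟩ :=
    (Finset.all_card_le_biUnion_card_iff_exists_injective (fun x : ι => pdom x.1.1)).mp hall
  refine ⟨fun h => if hh : h ∈ Δ then
      (Finset.univ : Finset (Fin t)).image (fun i => f (⟨h, hh⟩, i)) else ∅, ?_, ?_⟩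
  · intro h hh
    dsimp only
    rw [dif_pos hh]
    constructor
    · intro n hn
      obtain ⟨i, _, rfl⟩ := Finset.mem_image.mp hn
      exact hfmem _
    · rw [Finset.card_image_of_injective _ (fun i j hij => by
        have := hfinj hij; simpa using congrArg Prod.snd this)]
      simp
  · intro h hh g hg hne
    dsimp only
    rw [dif_pos hh, dif_pos hg]
    simp only [Finset.disjoint_left, Finset.mem_image]
    rintro n ⟨i, _, rfl⟩ ⟨j, _, hij⟩
    have := hfinj hij.symm
    exact hne (by simpa using congrArg (fun x => x.1.1) this)

theorem stmt_2 (H : ℕ → Set ℕ) (Δ₀ Δ₁ : Finset (Finset (ℕ × ℕ)))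
    (h₀ : InKH H Δ₀) (h₁ : InKH H Δ₁) :
    min (hnPlus Δ₀) (hnPlus Δ₁) / 2 ≤ hnPlus (Δ₀ ∪ Δ₁) := by
  classical
  obtain ⟨k₀, F₀, hF₀, e₀⟩ := hnPlus_attained Δ₀ h₀.1
  obtain ⟨k₁, F₁, hF₁, e₁⟩ := hnPlus_attained Δ₁ h₁.1
  set k := min k₀ k₁ with hk
  have hmin : min (hnPlus Δ₀) (hnPlus Δ₁) = k + 1 := by
    rw [e₀, e₁, hk]; omega
  have hH : ∀ A ⊆ Δ₀ ∪ Δ₁, (k / 2) * A.card ≤ (A.biUnion pdom).card := by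
    intro A hA
    set B := A ∩ Δ₀ with hBdef
    set C := A \ Δ₀ with hCdef
    have hB : B ⊆ Δ₀ := Finset.inter_subset_right
    have hC : C ⊆ Δ₁ := by
      intro x hx
      rcases Finset.mem_union.mp (hA (Finset.sdiff_subset hx)) with h | h
      · exact absurd h (Finset.mem_sdiff.mp hx).2
      · exact h
    have hcard : B.card + C.card = A.card := Finset.card_inter_add_card_sdiff A Δ₀
    have hBA : B ⊆ A := Finset.inter_subset_left
    have hCA : C ⊆ A := Finset.sdiff_subset
    have hB2 : k * B.card ≤ (A.biUnion pdom).card := by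
      calc k * B.card ≤ k₀ * B.card := Nat.mul_le_mul_right _ (min_le_left _ _)
        _ ≤ (B.biUnion pdom).card := selector_hall Δ₀ k₀ F₀ hF₀ B hB
        _ ≤ (A.biUnion pdom).card :=
            Finset.card_le_card (Finset.biUnion_subset_biUnion_of_subset_left _ hBA)
    have hC2 : k * C.card ≤ (A.biUnion pdom).card := by
      calc k * C.card ≤ k₁ * C.card := Nat.mul_le_mul_right _ (min_le_right _ _)
        _ ≤ (C.biUnion pdom).card := selector_hall Δ₁ k₁ F₁ hF₁ C hC
        _ ≤ (A.biUnion pdom).card :=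
            Finset.card_le_card (Finset.biUnion_subset_biUnion_of_subset_left _ hCA)
    rcases le_total B.card C.card with hle | hle
    · have h2 : A.card ≤ 2 * C.card := by omega
      calc k / 2 * A.card ≤ k / 2 * (2 * C.card) := Nat.mul_le_mul_left _ h2
        _ = (k / 2 * 2) * C.card := by ring
        _ ≤ k * C.card := Nat.mul_le_mul_right _ (Nat.div_mul_le_self k 2)
        _ ≤ _ := hC2
    · have h2 : A.card ≤ 2 * B.card := by omega
      calc k / 2 * A.card ≤ k / 2 * (2 * B.card) := Nat.mul_le_mul_left _ h2
        _ = (k / 2 * 2) * B.card := by ring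
        _ ≤ k * B.card := Nat.mul_le_mul_right _ (Nat.div_mul_le_self k 2)
        _ ≤ _ := hB2
  obtain ⟨F, hF⟩ := exists_selector (Δ₀ ∪ Δ₁) (k / 2) hH
  have hne : (Δ₀ ∪ Δ₁).Nonempty := h₀.1.mono Finset.subset_union_left
  have hle : k / 2 + 1 ≤ hnPlus (Δ₀ ∪ Δ₁) :=
    le_csSup (sel_bdd _ hne) ⟨k / 2, F, hF, rfl⟩
  rw [hmin]
  omega
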